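/- Let a_j = i^{j−1} for j = 1, 2, 3, 4 (so (a₁,a₂,a₃,a₄) = (1, i, −1, −i)), with indices taken cyclically modulo 4 (a₅ = a₁, a₀ = a₄). Then the real part of (2/π) · ∑_{j=1}^4 ∑_{k=1}^4 (−1)^{j+k} · a_j² · conj(a_k)² · (a_{j+1} − a_{j−1}) · (conj(a_{k+1}) − conj(a_{k−1})) / ((a_{j+1} − a_j)·(a_j − a_{j−1})·(conj(a_{k+1}) − conj(a_k))·(conj(a_k) − conj(a_{k−1}))) · σ(a_j, a_k) equals (8/π)·log 2, where σ(a,b) = ∑_{p=0}^∞ (a·conj(b))^{p+1}/((p+1)(p+2)(p+3)). -/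

import Mathlib

open scoped ComplexConjugate
open Filter Topology

/-- The kernel `σ(a,b) = ∑_{p=0}^∞ (a·conj b)^{p+1}/((p+1)(p+2)(p+3))` for `a, b` on the
unit circle. -/
noncomputable def sigmaWP (a b : ℂ) : ℂ :=
  ∑' p : ℕ, (a * conj b) ^ (p + 1) / (((p : ℂ) + 1) * ((p : ℂ) + 2) * ((p : ℂ) + 3))

/-- The vertices `a_j = i^{j−1}` of the standard quad `(1, i, −1, −i)`, indexed cyclically by
`j : ℤ` (the formula is automatically `4`-periodic since `i⁴ = 1`). -/
noncomputable def quadVertex (j : ℤ) : ℂ := Complex.I ^ (j - 1)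

noncomputable def Dc (p : ℕ) : ℂ := ((p:ℂ)+1)*((p:ℂ)+2)*((p:ℂ)+3)

noncomputable def Sfun (z : ℂ) : ℂ := ∑' p : ℕ, z ^ (p + 1) / Dc p

lemma sigmaWP_eq (a b : ℂ) : sigmaWP a b = Sfun (a * conj b) := rfl

lemma summable_shift_sq : Summable (fun m : ℕ => (1:ℝ)/((m:ℝ)+1)^2) := by
  have := (summable_nat_add_iff (f := fun n : ℕ => (1:ℝ)/(n:ℝ)^2) 1).2
    (Real.summable_one_div_nat_pow.mpr one_lt_two)
  simpa [Nat.cast_add] using this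

lemma summable_sigma_term {z : ℂ} (hz : ‖z‖ = 1) :
    Summable (fun p : ℕ => z^(p+1)/Dc p) := by
  apply Summable.of_norm
  refine Summable.of_nonneg_of_le (fun p => norm_nonneg _) (fun p => ?_) summable_shift_sq
  rw [norm_div, norm_pow, hz, one_pow]
  have hD : Dc p = ((((p:ℝ)+1)*((p:ℝ)+2)*((p:ℝ)+3) : ℝ):ℂ) := by
    simp [Dc]
  have hp : (0:ℝ) ≤ (p:ℝ) := p.cast_nonneg
  rw [hD, Complex.norm_real, Real.norm_eq_abs, abs_of_pos (by positivity)]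
  have h1 : ((p:ℝ)+1)^2 ≤ ((p:ℝ)+1)*((p:ℝ)+2)*((p:ℝ)+3) := by nlinarith
  exact one_div_le_one_div_of_le (by positivity) h1

lemma summable_aux : Summable (fun m : ℕ => (1:ℝ)/((4*(m:ℝ)+1)*(4*(m:ℝ)+2)*(4*(m:ℝ)+3))) := by
  refine Summable.of_nonneg_of_le (fun m => by positivity) (fun m => ?_) summable_shift_sq
  have hm : (0:ℝ) ≤ (m:ℝ) := m.cast_nonneg
  have h1 : ((m:ℝ)+1)^2 ≤ (4*(m:ℝ)+1)*(4*(m:ℝ)+2)*(4*(m:ℝ)+3) := by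
    nlinarith [sq_nonneg ((m:ℝ)), mul_nonneg hm hm, mul_nonneg (mul_nonneg hm hm) hm]
  exact one_div_le_one_div_of_le (by positivity) h1

lemma partial_sum_eq (M : ℕ) :
    ∑ m ∈ Finset.range M, (1:ℝ)/((4*(m:ℝ)+1)*(4*(m:ℝ)+2)*(4*(m:ℝ)+3))
    = (1/2)*(((harmonic (4*M) : ℚ):ℝ) - (3/2)*((harmonic (2*M):ℚ):ℝ)
        + (1/2)*((harmonic M:ℚ):ℝ)) := by
  induction M with
  | zero => simp
  | succ n ih =>
    rw [Finset.sum_range_succ, ih]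
    have h4 : 4*(n+1) = (4*n)+1+1+1+1 := by ring
    have h2 : 2*(n+1) = (2*n)+1+1 := by ring
    rw [h4, h2, harmonic_succ, harmonic_succ, harmonic_succ, harmonic_succ, harmonic_succ,
      harmonic_succ, harmonic_succ]
    push_cast
    have h1 : (4*(n:ℝ)+1) ≠ 0 := by positivity
    have h2 : (4*(n:ℝ)+2) ≠ 0 := by positivity
    have h3 : (4*(n:ℝ)+3) ≠ 0 := by positivity
    have h4 : (4*(n:ℝ)+4) ≠ 0 := by positivity
    have h5 : (2*(n:ℝ)+1) ≠ 0 := by positivity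
    have h6 : (2*(n:ℝ)+2) ≠ 0 := by positivity
    have h7 : ((n:ℝ)+1) ≠ 0 := by positivity
    field_simp
    ring

lemma tendsto_mul_nat (c : ℕ) (hc : 0 < c) : Tendsto (fun M : ℕ => c*M) atTop atTop :=
  tendsto_atTop_atTop_of_monotone (fun _ _ h => Nat.mul_le_mul_left c h)
    (fun b => ⟨b, Nat.le_mul_of_pos_left b hc⟩)

lemma harm_comb_tendsto :
    Tendsto (fun M : ℕ => ((harmonic (4*M) : ℚ):ℝ) - (3/2)*((harmonic (2*M):ℚ):ℝ)
      + (1/2)*((harmonic M:ℚ):ℝ)) atTop (𝓝 (Real.log 2 / 2)) := by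
  have l4 : Tendsto (fun M : ℕ => ((harmonic (4*M) : ℚ):ℝ) - Real.log (4*M)) atTop
      (𝓝 Real.eulerMascheroniConstant) := by
    have := Real.tendsto_harmonic_sub_log.comp (tendsto_mul_nat 4 (by norm_num))
    simpa [Function.comp_def, Nat.cast_mul] using this
  have l2 : Tendsto (fun M : ℕ => ((harmonic (2*M) : ℚ):ℝ) - Real.log (2*M)) atTop
      (𝓝 Real.eulerMascheroniConstant) := by
    have := Real.tendsto_harmonic_sub_log.comp (tendsto_mul_nat 2 (by norm_num))
    simpa [Function.comp_def, Nat.cast_mul] using this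
  have l1 : Tendsto (fun M : ℕ => ((harmonic M : ℚ):ℝ) - Real.log M) atTop
      (𝓝 Real.eulerMascheroniConstant) := Real.tendsto_harmonic_sub_log
  have comb := (l4.sub (l2.const_mul (3/2))).add (l1.const_mul (1/2))
  have hγ : Real.eulerMascheroniConstant - (3/2)*Real.eulerMascheroniConstant
      + (1/2)*Real.eulerMascheroniConstant = 0 := by ring
  rw [hγ] at comb
  have comb' := comb.add_const (Real.log 2 / 2)
  rw [zero_add] at comb'
  apply comb'.congr'
  filter_upwards [eventually_ge_atTop 1] with M hM
  have hM0 : (M:ℝ) ≠ 0 := by positivity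
  have hlog4 : Real.log (4*(M:ℝ)) = Real.log 4 + Real.log M :=
    Real.log_mul (by norm_num) hM0
  have hlog2 : Real.log (2*(M:ℝ)) = Real.log 2 + Real.log M :=
    Real.log_mul (by norm_num) hM0
  have h42 : Real.log 4 = 2 * Real.log 2 := by
    rw [show (4:ℝ) = 2^2 by norm_num, Real.log_pow]; push_cast; ring
  rw [hlog4, hlog2, h42]
  ring

lemma hasSum_T :
    HasSum (fun m : ℕ => (1:ℝ)/((4*(m:ℝ)+1)*(4*(m:ℝ)+2)*(4*(m:ℝ)+3))) (Real.log 2 / 4) := by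
  have hs := summable_aux
  have h1 := hs.hasSum.tendsto_sum_nat
  have h2 : Tendsto (fun M : ℕ => ∑ m ∈ Finset.range M,
      (1:ℝ)/((4*(m:ℝ)+1)*(4*(m:ℝ)+2)*(4*(m:ℝ)+3))) atTop (𝓝 (Real.log 2/4)) := by
    have := harm_comb_tendsto.const_mul (1/2)
    rw [show (1/2) * (Real.log 2 / 2) = Real.log 2 / 4 by ring] at this
    refine this.congr fun M => ?_
    rw [partial_sum_eq M]
  have := tendsto_nhds_unique h1 h2
  exact this ▸ hs.hasSum

lemma hasSum_g :
    HasSum (fun p : ℕ => (if p % 4 = 0 then (4:ℂ) else 0)/Dc p) ((Real.log 2 : ℝ):ℂ) := by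
  have h0 := hasSum_T.mul_left 4
  rw [show (4:ℝ) * (Real.log 2 / 4) = Real.log 2 by ring] at h0
  have h := Complex.hasSum_ofReal.mpr h0
  have hinj : Function.Injective (fun m : ℕ => 4*m) := fun a b hb => by
    simpa using hb
  refine (Function.Injective.hasSum_iff hinj ?_).mp ?_
  · intro x hx
    have hx4 : x % 4 ≠ 0 := by
      intro hmod
      exact hx ⟨x/4, show 4*(x/4) = x by omega⟩
    simp [hx4]
  · refine h.congr_fun fun m => ?_
    show (if (4*m) % 4 = 0 then (4:ℂ) else 0)/Dc (4*m)
        = ((4 * ((1:ℝ)/((4*(m:ℝ)+1)*(4*(m:ℝ)+2)*(4*(m:ℝ)+3))) : ℝ):ℂ)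
    rw [if_pos (Nat.mul_mod_right 4 m)]
    push_cast [Dc]
    ring

theorem combo :
    Sfun 1 - Sfun (-1) - Complex.I * Sfun Complex.I + Complex.I * Sfun (-Complex.I)
      = ((Real.log 2 : ℝ):ℂ) := by
  have h1 := (summable_sigma_term (z := 1) (by simp)).hasSum
  have hm1 := (summable_sigma_term (z := -1) (by simp)).hasSum
  have hi := (summable_sigma_term (z := Complex.I) (by simp)).hasSum
  have hmi := (summable_sigma_term (z := -Complex.I) (by simp)).hasSum
  have H := ((h1.sub hm1).sub (hi.mul_left Complex.I)).add (hmi.mul_left Complex.I)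
  refine HasSum.unique ?_ hasSum_g
  refine H.congr_fun fun p => ?_
  obtain ⟨q, r, hr, rfl⟩ : ∃ q r, r < 4 ∧ p = 4*q + r :=
    ⟨p/4, p%4, Nat.mod_lt _ (by norm_num), (Nat.div_add_mod p 4).symm⟩
  have hmod : (4*q + r) % 4 = r := by omega
  rw [hmod]
  have em : (-1:ℂ)^(4*q+r+1) = (-1)^(r+1) := by
    rw [pow_add, pow_add, pow_mul]; norm_num; rw [pow_succ]; ring
  have ei : Complex.I^(4*q+r+1) = Complex.I^(r+1) := by
    rw [pow_add, pow_add, pow_mul, Complex.I_pow_four, one_pow, one_mul, pow_one, pow_succ]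
  have emi : (-Complex.I)^(4*q+r+1) = (-Complex.I)^(r+1) := by
    rw [pow_add, pow_add, pow_mul, show (-Complex.I)^4 = 1 by
      rw [neg_pow, Complex.I_pow_four]; norm_num, one_pow, one_mul, pow_one, pow_succ]
  rw [em, ei, emi, one_pow]
  interval_cases r <;>
    simp only [pow_succ, pow_zero, one_mul, Complex.I_mul_I, if_true, if_false,
      mul_neg, neg_mul, neg_neg, mul_one] <;>
    norm_num [Complex.I_mul_I] <;>
    ring_nf <;>
    simp [Complex.I_sq] <;> ring

lemma qv1 : quadVertex 1 = 1 := by simp [quadVertex]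
lemma qv2 : quadVertex 2 = Complex.I := by simp [quadVertex]
lemma qv3 : quadVertex 3 = -1 := by
  rw [quadVertex, show (3:ℤ)-1 = ((2:ℕ):ℤ) from rfl, zpow_natCast, Complex.I_sq]
lemma qv4 : quadVertex 4 = -Complex.I := by
  rw [quadVertex, show (4:ℤ)-1 = ((3:ℕ):ℤ) from rfl, zpow_natCast, pow_succ, Complex.I_sq]
  ring
lemma qv5 : quadVertex 5 = 1 := by
  rw [quadVertex, show (5:ℤ)-1 = ((4:ℕ):ℤ) from rfl, zpow_natCast, Complex.I_pow_four]
lemma qv0 : quadVertex 0 = -Complex.I := by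
  rw [quadVertex, show (0:ℤ)-1 = -1 from rfl, zpow_neg_one, Complex.inv_I]

lemma sum_icc14 (f : ℤ → ℂ) : ∑ j ∈ Finset.Icc (1:ℤ) 4, f j = f 1 + f 2 + f 3 + f 4 := by
  rw [show Finset.Icc (1:ℤ) 4 = {1, 2, 3, 4} by rfl]
  rw [show ({1,2,3,4} : Finset ℤ) = insert 1 (insert 2 (insert 3 {4})) from rfl]
  rw [Finset.sum_insert (by decide), Finset.sum_insert (by decide),
    Finset.sum_insert (by decide), Finset.sum_singleton]
  ring

/-- **Weil–Petersson norm of a single diamond shear.**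
The real part of the double sum expressing `‖u‖²_WP` for the unit infinitesimal diamond shear
on the quad `(1, i, −1, −i)` with diagonal `(1, −1)` equals `(8/π) log 2`. -/
theorem wp_norm_single_diamond :
    ((((2 / Real.pi : ℝ) : ℂ)) *
        ∑ j ∈ Finset.Icc (1 : ℤ) 4, ∑ k ∈ Finset.Icc (1 : ℤ) 4,
          (-1 : ℂ) ^ (j + k) * (quadVertex j) ^ 2 * (conj (quadVertex k)) ^ 2 *
              (quadVertex (j + 1) - quadVertex (j - 1)) *
              (conj (quadVertex (k + 1)) - conj (quadVertex (k - 1))) /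
              ((quadVertex (j + 1) - quadVertex j) * (quadVertex j - quadVertex (j - 1)) *
                (conj (quadVertex (k + 1)) - conj (quadVertex k)) *
                (conj (quadVertex k) - conj (quadVertex (k - 1)))) *
              sigmaWP (quadVertex j) (quadVertex k)).re
      = 8 / Real.pi * Real.log 2 := by
  have hI2 : Complex.I^2 = -1 := Complex.I_sq
  have hI3 : Complex.I^3 = -Complex.I := by rw [pow_succ, hI2]; ring
  have hI4 : Complex.I^4 = 1 := Complex.I_pow_four
  have hI5 : Complex.I^5 = Complex.I := by rw [pow_succ, hI4, one_mul]
  have hI6 : Complex.I^6 = -1 := by rw [pow_succ, hI5, Complex.I_mul_I]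
  have hI7 : Complex.I^7 = -Complex.I := by rw [pow_succ, hI6]; ring
  have hI8 : Complex.I^8 = 1 := by rw [pow_succ, hI7]; simp [Complex.I_mul_I]
  have key : (∑ j ∈ Finset.Icc (1 : ℤ) 4, ∑ k ∈ Finset.Icc (1 : ℤ) 4,
          (-1 : ℂ) ^ (j + k) * (quadVertex j) ^ 2 * (conj (quadVertex k)) ^ 2 *
              (quadVertex (j + 1) - quadVertex (j - 1)) *
              (conj (quadVertex (k + 1)) - conj (quadVertex (k - 1))) /
              ((quadVertex (j + 1) - quadVertex j) * (quadVertex j - quadVertex (j - 1)) *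
                (conj (quadVertex (k + 1)) - conj (quadVertex k)) *
                (conj (quadVertex k) - conj (quadVertex (k - 1)))) *
              sigmaWP (quadVertex j) (quadVertex k))
      = 4 * ((Real.log 2 : ℝ):ℂ) := by
    rw [sum_icc14]
    simp only [sum_icc14]
    norm_num [qv0, qv1, qv2, qv3, qv4, qv5, sigmaWP_eq, Complex.conj_I, map_one, map_neg]
    have combo' := combo
    rw [Complex.ofReal_log (by norm_num : (0:ℝ) ≤ 2), Complex.ofReal_ofNat] at combo'
    rw [← combo']
    ring_nf
    simp only [hI2, hI3, hI4, hI5, hI6, hI7, hI8]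
    ring_nf
  rw [key, show (((2 / Real.pi : ℝ):ℂ)) * (4 * ((Real.log 2 : ℝ):ℂ))
      = (((8 / Real.pi * Real.log 2 : ℝ)):ℂ) by push_cast; ring, Complex.ofReal_re]
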